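/- Let f be a polynomial over ℂ of degree n with leading coefficient aₙ ≠ 0. For every ε > 0 there exists δ > 0 such that if g is a polynomial of degree at most n whose coefficients satisfy |coeff(f,i) - coeff(g,i)| < δ for all 0 ≤ i ≤ n, then every root s of g lies within distance ε of some root of f. -/

import Mathlib

open Polynomial

private lemma aux_pow_card_le_prod (t : Multiset ℝ) (a : ℝ) (ha : 0 ≤ a)
    (h : ∀ x ∈ t, a ≤ x) : a ^ Multiset.card t ≤ t.prod := by
  induction t using Multiset.induction with
  | empty => simp
  | cons x t ih =>
    simp only [Multiset.card_cons, Multiset.prod_cons, pow_succ]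
    rw [mul_comm]
    have hx : a ≤ x := h x (Multiset.mem_cons_self x t)
    have ht : a ^ Multiset.card t ≤ t.prod := ih fun y hy => h y (Multiset.mem_cons_of_mem hy)
    exact mul_le_mul hx ht (pow_nonneg ha _) (le_trans ha hx)

theorem root_of_perturbation_near_root
    (n : ℕ) (f : Polynomial ℂ) (hf : f.natDegree = n) (hfn : f.coeff n ≠ 0) :
    ∀ ε > 0, ∃ δ > 0, ∀ g : Polynomial ℂ, g.natDegree ≤ n →
      (∀ i ≤ n, ‖f.coeff i - g.coeff i‖ < δ) →
      ∀ s : ℂ, g.eval s = 0 → ∃ r : ℂ, f.eval r = 0 ∧ ‖s - r‖ < ε := by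
  intro ε hε
  set a : ℂ := f.coeff n with ha
  have ha0 : (0:ℝ) < ‖a‖ := norm_pos_iff.mpr hfn
  -- coefficient bound of f
  set B : ℝ := ∑ i ∈ Finset.range (n+1), (‖f.coeff i‖ + 1) with hB
  have hB0 : (0:ℝ) < B := by
    apply Finset.sum_pos
    · intro i _; positivity
    · exact ⟨0, Finset.mem_range.2 (Nat.succ_pos n)⟩
  set M : ℝ := max 1 (2 * B / ‖a‖) with hM
  have hM1 : (1:ℝ) ≤ M := le_max_left _ _
  have hM0 : (0:ℝ) < M := lt_of_lt_of_le one_pos hM1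
  set δ : ℝ := min (min 1 (‖a‖ / 2))
      (‖a‖ * ε ^ n / ((n + 1) * M ^ n)) with hδ
  have hδ0 : 0 < δ := by
    apply lt_min (lt_min one_pos (by positivity))
    positivity
  refine ⟨δ, hδ0, ?_⟩
  intro g hg hcoeff s hs
  have hδ1 : δ ≤ 1 := le_trans (min_le_left _ _) (min_le_left _ _)
  have hδa : δ ≤ ‖a‖ / 2 := le_trans (min_le_left _ _) (min_le_right _ _)
  have hδε : δ ≤ ‖a‖ * ε ^ n / ((n + 1) * M ^ n) := min_le_right _ _
  -- g.coeff n is close to a, hence nonzero with abs > |a|/2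
  have hgn : ‖a‖ / 2 < ‖g.coeff n‖ := by
    have h1 := hcoeff n le_rfl
    have h2 : ‖a‖ ≤ ‖a - g.coeff n‖ + ‖g.coeff n‖ := by
      calc ‖a‖ = ‖(a - g.coeff n) + g.coeff n‖ := by congr 1; ring
        _ ≤ _ := norm_add_le _ _
    have := lt_of_lt_of_le h1 hδa
    linarith
  -- all g coefficients bounded
  have hgc : ∀ i ≤ n, ‖g.coeff i‖ ≤ ‖f.coeff i‖ + 1 := by
    intro i hi
    have h1 := hcoeff i hi
    have h2 : ‖g.coeff i‖ ≤ ‖f.coeff i - g.coeff i‖ + ‖f.coeff i‖ := by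
      calc ‖g.coeff i‖
          = ‖(g.coeff i - f.coeff i) + f.coeff i‖ := by congr 1; ring
        _ ≤ ‖g.coeff i - f.coeff i‖ + ‖f.coeff i‖ :=
            norm_add_le _ _
        _ = _ := by rw [norm_sub_rev]
    linarith
  -- eval of g as a sum
  have hgdeg : g.natDegree < n + 1 := Nat.lt_succ_of_le hg
  have hfdeg : f.natDegree < n + 1 := by omega
  have hgeval : g.eval s = ∑ i ∈ Finset.range (n+1), g.coeff i * s ^ i :=
    Polynomial.eval_eq_sum_range' hgdeg s
  -- bound |s| ≤ M
  have hsM : ‖s‖ ≤ M := by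
    by_contra hcon
    push_neg at hcon
    have hs1 : (1:ℝ) < ‖s‖ := lt_of_le_of_lt hM1 hcon
    have hs0 : (0:ℝ) < ‖s‖ := lt_trans one_pos hs1
    -- leading term = - rest
    have hsum : g.coeff n * s ^ n = -∑ i ∈ Finset.range n, g.coeff i * s ^ i := by
      have := hgeval
      rw [Finset.sum_range_succ] at this
      rw [hs] at this
      linear_combination -this
    have hnorm : ‖g.coeff n‖ * ‖s‖ ^ n
        ≤ ∑ i ∈ Finset.range n, ‖g.coeff i‖ * ‖s‖ ^ i := by
      calc ‖g.coeff n‖ * ‖s‖ ^ n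
          = ‖g.coeff n * s ^ n‖ := by rw [norm_mul, norm_pow]
        _ = ‖∑ i ∈ Finset.range n, g.coeff i * s ^ i‖ := by
            rw [hsum, norm_neg]
        _ ≤ ∑ i ∈ Finset.range n, ‖g.coeff i * s ^ i‖ := norm_sum_le _ _
        _ = _ := Finset.sum_congr rfl fun i _ => by rw [norm_mul, norm_pow]
    have hrest : ∑ i ∈ Finset.range n, ‖g.coeff i‖ * ‖s‖ ^ i
        ≤ B * ‖s‖ ^ (n - 1) := by
      rcases Nat.eq_zero_or_pos n with h0 | hn1
      · subst h0; simp [hB]; positivity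
      calc ∑ i ∈ Finset.range n, ‖g.coeff i‖ * ‖s‖ ^ i
          ≤ ∑ i ∈ Finset.range n, (‖f.coeff i‖ + 1) * ‖s‖ ^ (n-1) := by
            apply Finset.sum_le_sum
            intro i hi
            have hin : i < n := Finset.mem_range.1 hi
            have hi' : i ≤ n := le_of_lt hin
            have h1 : ‖s‖ ^ i ≤ ‖s‖ ^ (n-1) := by
              apply pow_le_pow_right₀ (le_of_lt hs1)
              omega
            exact mul_le_mul (hgc i hi') h1 (by positivity) (by positivity)
        _ = (∑ i ∈ Finset.range n, (‖f.coeff i‖ + 1)) * ‖s‖ ^ (n-1) := by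
            rw [Finset.sum_mul]
        _ ≤ B * ‖s‖ ^ (n-1) := by
            apply mul_le_mul_of_nonneg_right _ (by positivity)
            rw [hB, Finset.sum_range_succ]
            have : (0:ℝ) ≤ ‖f.coeff n‖ + 1 := by positivity
            linarith
    rcases Nat.eq_zero_or_pos n with h0 | hn1
    ·
      subst h0
      simp at hsum
      rw [hsum] at hgn
      simp at hgn
      linarith
    have hpow : ‖s‖ ^ n = ‖s‖ ^ (n-1) * ‖s‖ := by
      rw [← pow_succ]
      congr 1
      omega
    have hkey : ‖g.coeff n‖ * ‖s‖ ≤ B := by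
      have h2 : ‖g.coeff n‖ * (‖s‖ ^ (n-1) * ‖s‖)
          ≤ B * ‖s‖ ^ (n-1) := by
        rw [← hpow]; exact le_trans hnorm hrest
      have hp0 : (0:ℝ) < ‖s‖ ^ (n-1) := by positivity
      nlinarith
    have hMles : M < ‖s‖ := hcon
    have h2B : ‖s‖ ≤ 2 * B / ‖a‖ := by
      rw [le_div_iff₀ ha0]
      nlinarith [hs0, ha0, hkey, hgn]
    have : ‖s‖ ≤ M := le_trans h2B (le_max_right _ _)
    linarith
  -- bound |f(s)|
  have hfs : ‖f.eval s‖ < δ * ((n+1) * M ^ n) := by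
    have hfe : f.eval s = ∑ i ∈ Finset.range (n+1), f.coeff i * s ^ i :=
      Polynomial.eval_eq_sum_range' hfdeg s
    have h0 : ∑ i ∈ Finset.range (n+1), g.coeff i * s ^ i = 0 := by rw [← hgeval, hs]
    have hdiff : f.eval s = ∑ i ∈ Finset.range (n+1), (f.coeff i - g.coeff i) * s ^ i := by
      calc f.eval s
          = (∑ i ∈ Finset.range (n+1), f.coeff i * s ^ i)
            - ∑ i ∈ Finset.range (n+1), g.coeff i * s ^ i := by rw [hfe, h0, sub_zero]
        _ = ∑ i ∈ Finset.range (n+1), (f.coeff i * s ^ i - g.coeff i * s ^ i) := by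
            rw [Finset.sum_sub_distrib]
        _ = _ := Finset.sum_congr rfl fun i _ => by ring
    rw [hdiff]
    calc ‖∑ i ∈ Finset.range (n+1), (f.coeff i - g.coeff i) * s ^ i‖
        ≤ ∑ i ∈ Finset.range (n+1), ‖(f.coeff i - g.coeff i) * s ^ i‖ :=
          norm_sum_le _ _
      _ < ∑ _i ∈ Finset.range (n+1), δ * M ^ n := by
          apply Finset.sum_lt_sum_of_nonempty ⟨0, Finset.mem_range.2 (Nat.succ_pos n)⟩
          intro i hi
          have hi' : i ≤ n := Nat.lt_succ_iff.1 (Finset.mem_range.1 hi)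
          rw [norm_mul, norm_pow]
          have h1 : ‖s‖ ^ i ≤ M ^ n := by
            calc ‖s‖ ^ i ≤ M ^ i :=
                  pow_le_pow_left₀ (norm_nonneg s) hsM i
              _ ≤ M ^ n := pow_le_pow_right₀ hM1 hi'
          calc ‖f.coeff i - g.coeff i‖ * ‖s‖ ^ i
              ≤ ‖f.coeff i - g.coeff i‖ * M ^ n :=
                mul_le_mul_of_nonneg_left h1 (norm_nonneg _)
            _ < δ * M ^ n := by
                apply mul_lt_mul_of_pos_right (hcoeff i hi')
                positivity
      _ = δ * ((n+1) * M ^ n) := by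
          rw [Finset.sum_const, Finset.card_range]
          ring
  -- factorization of f
  have hf0 : f ≠ 0 := fun h => hfn (by rw [ha, h, Polynomial.coeff_zero])
  have hsplits : Splits f := IsAlgClosed.splits f
  have hfact := hsplits.eq_prod_roots
  have hlead : f.leadingCoeff = a := by rw [Polynomial.leadingCoeff, hf]
  have hcard : Multiset.card f.roots = n := by
    rw [← hf]
    exact (Polynomial.splits_iff_card_roots.1 hsplits)
  -- evaluate
  have heval : ‖f.eval s‖
      = ‖a‖ * ((f.roots.map (fun r => ‖s - r‖)).prod) := by
    conv_lhs => rw [hfact]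
    rw [Polynomial.eval_mul, Polynomial.eval_C, hlead, norm_mul]
    congr 1
    have hnp : ∀ m : Multiset ℂ, ‖m.prod‖ = (m.map (fun x => ‖x‖)).prod := fun m => by
      induction m using Multiset.induction with
      | empty => simp
      | cons x t ih => simp [ih]
    rw [Polynomial.eval_multiset_prod, hnp]
    congr 1
    rw [Multiset.map_map, Multiset.map_map]
    apply Multiset.map_congr rfl
    intro r _
    simp
  -- now the main argument
  by_contra hcon
  push_neg at hcon
  have hlow : ∀ x ∈ f.roots.map (fun r => ‖s - r‖), ε ≤ x := by
    intro x hx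
    rw [Multiset.mem_map] at hx
    obtain ⟨r, hr, rfl⟩ := hx
    have hroot : f.eval r = 0 := by
      have := Polynomial.isRoot_of_mem_roots hr
      exact this
    exact hcon r hroot
  have hprod : ε ^ n ≤ (f.roots.map (fun r => ‖s - r‖)).prod := by
    have := aux_pow_card_le_prod (f.roots.map (fun r => ‖s - r‖)) ε (le_of_lt hε) hlow
    rwa [Multiset.card_map, hcard] at this
  have hge : ‖a‖ * ε ^ n ≤ ‖f.eval s‖ := by
    rw [heval]
    exact mul_le_mul_of_nonneg_left hprod (le_of_lt ha0)
  have hlt : δ * ((n+1) * M ^ n) ≤ ‖a‖ * ε ^ n := by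
    have hd : (0:ℝ) < (n+1) * M ^ n := by positivity
    calc δ * ((n+1) * M ^ n) ≤ (‖a‖ * ε ^ n / ((n + 1) * M ^ n)) * ((n+1) * M ^ n) :=
          mul_le_mul_of_nonneg_right hδε (le_of_lt hd)
      _ = ‖a‖ * ε ^ n := by field_simp
  linarith
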